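/- Let V be a finite-dimensional real inner product space and let A, B : V → V both be symmetric positive definite. Then the smallest eigenvalue of BA satisfies λ_min(BA) = ( sup_{v ∈ V, ‖v‖_A = 1} ⟨B⁻¹v, v⟩ )⁻¹ and the largest eigenvalue satisfies λ_max(BA) = ( inf_{v ∈ V, ‖v‖_A = 1} ⟨B⁻¹v, v⟩ )⁻¹. -/

import Mathlib

open scoped RealInnerProductSpace

section helpers

lemma inv_image_bounds (P : Set ℝ) (hfin : P.Finite) (hne : P.Nonempty)
    (hpos : ∀ p ∈ P, 0 < p) :
    sSup ((fun x : ℝ => x⁻¹) '' P) = (sInf P)⁻¹ ∧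
    sInf ((fun x : ℝ => x⁻¹) '' P) = (sSup P)⁻¹ := by
  have h1 : sInf P ∈ P := hne.csInf_mem hfin
  have h2 : sSup P ∈ P := hne.csSup_mem hfin
  constructor
  · apply le_antisymm
    · apply csSup_le (hne.image _)
      rintro _ ⟨p, hp, rfl⟩
      exact inv_anti₀ (hpos _ h1) (csInf_le hfin.bddBelow hp)
    · exact le_csSup (hfin.image _).bddAbove ⟨_, h1, rfl⟩
  · apply le_antisymm
    · exact csInf_le (hfin.image _).bddBelow ⟨_, h2, rfl⟩
    · apply le_csInf (hne.image _)
      rintro _ ⟨p, hp, rfl⟩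
      exact inv_anti₀ (hpos _ hp) (le_csSup hfin.bddAbove hp)

end helpers


lemma spectral_key {E : Type*} [NormedAddCommGroup E] [InnerProductSpace ℝ E]
    [FiniteDimensional ℝ E] [Nontrivial E] (T : E →ₗ[ℝ] E) (hT : T.IsSymmetric) :
    {μ : ℝ | ∃ v : E, v ≠ 0 ∧ T v = μ • v}.Finite ∧
    {μ : ℝ | ∃ v : E, v ≠ 0 ∧ T v = μ • v}.Nonempty ∧
    (∀ v : E,
      sInf {μ : ℝ | ∃ v : E, v ≠ 0 ∧ T v = μ • v} * ⟪v, v⟫ ≤ ⟪T v, v⟫ ∧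
      ⟪T v, v⟫ ≤ sSup {μ : ℝ | ∃ v : E, v ≠ 0 ∧ T v = μ • v} * ⟪v, v⟫) := by
  set S : Set ℝ := {μ : ℝ | ∃ v : E, v ≠ 0 ∧ T v = μ • v} with hS
  have hn : Module.finrank ℝ E = Module.finrank ℝ E := rfl
  set n := Module.finrank ℝ E with hndef
  have hnpos : 0 < n := Module.finrank_pos
  haveI : Nonempty (Fin n) := Fin.pos_iff_nonempty.mp hnpos
  set b := hT.eigenvectorBasis hn with hb
  set eig := hT.eigenvalues hn with heig
  -- S = range eig
  have hSrange : S = Set.range eig := by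
    ext μ
    constructor
    · rintro ⟨v, hv0, hTv⟩
      by_contra hne
      apply hv0
      have : ∀ i, b.repr v i = 0 := by
        intro i
        have h1 : b.repr (T v) i = eig i * b.repr v i :=
          hT.eigenvectorBasis_apply_self_apply hn v i
        rw [hTv] at h1
        have h2 : b.repr (μ • v) i = μ * b.repr v i := by
          simp [map_smul]
        rw [h2] at h1
        have hμne : eig i ≠ μ := fun h => hne ⟨i, h⟩
        have := sub_eq_zero.mpr h1.symm
        rw [← sub_mul] at this
        rcases mul_eq_zero.mp this with h | h
        · exact absurd ⟨i, sub_eq_zero.mp h⟩ hne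
        · exact h
      have : b.repr v = 0 := by
        ext i; simpa using this i
      simpa using b.repr.map_eq_zero_iff.mp this
    · rintro ⟨i, rfl⟩
      refine ⟨b i, b.toBasis.ne_zero i, ?_⟩
      have h := hT.apply_eigenvectorBasis hn i
      rw [hb, heig]
      exact_mod_cast h
  have hfin : S.Finite := hSrange ▸ Set.finite_range eig
  have hne : S.Nonempty := hSrange ▸ Set.range_nonempty eig
  refine ⟨hfin, hne, ?_⟩
  intro v
  have hmem : ∀ i, eig i ∈ S := fun i => hSrange ▸ Set.mem_range_self i
  have hTvv : ⟪T v, v⟫ = ∑ i, eig i * (b.repr v i)^2 := by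
    have h1 : ⟪T v, v⟫ = ∑ i, b.repr (T v) i * b.repr v i := by
      rw [← b.repr.inner_map_map (T v) v, PiLp.inner_apply]
      simp only [RCLike.inner_apply, conj_trivial]
      exact Finset.sum_congr rfl fun i _ => mul_comm _ _
    rw [h1]
    refine Finset.sum_congr rfl fun i _ => ?_
    have h2 := hT.eigenvectorBasis_apply_self_apply hn v i
    rw [← hb, ← heig] at h2
    rw [h2]
    simp only [RCLike.ofReal_real_eq_id, id_eq]
    ring
  have hvv : ⟪v, v⟫ = ∑ i, (b.repr v i)^2 := by
    rw [← b.repr.inner_map_map v v, PiLp.inner_apply]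
    simp only [RCLike.inner_apply, conj_trivial, sq]
  constructor
  · rw [hTvv, hvv, Finset.mul_sum]
    refine Finset.sum_le_sum fun i _ => ?_
    exact mul_le_mul_of_nonneg_right (csInf_le hfin.bddBelow (hmem i)) (sq_nonneg _)
  · rw [hTvv, hvv, Finset.mul_sum]
    refine Finset.sum_le_sum fun i _ => ?_
    exact mul_le_mul_of_nonneg_right (le_csSup hfin.bddAbove (hmem i)) (sq_nonneg _)


variable {V : Type*} [NormedAddCommGroup V] [InnerProductSpace ℝ V] [FiniteDimensional ℝ V]

/-- The inner product space core induced by a symmetric positive definite operator. -/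
noncomputable def coreOf (A : V →ₗ[ℝ] V) (hAsym : A.IsSymmetric)
    (hApos : ∀ v : V, v ≠ 0 → 0 < ⟪A v, v⟫) : InnerProductSpace.Core ℝ V where
  inner u v := ⟪A u, v⟫
  conj_inner_symm x y := by
    simp only [starRingEnd_apply, star_trivial]
    rw [hAsym y x, real_inner_comm]
  re_inner_nonneg x := by
    rcases eq_or_ne x 0 with rfl | hx
    · simp
    · exact le_of_lt (by simpa using hApos x hx)
  add_left x y z := by simp [inner_add_left]
  smul_left x y r := by simp [real_inner_smul_left]
  definite x hx := by
    by_contra h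
    exact absurd hx (ne_of_gt (by simpa using hApos x h))

/-- The norm induced by a (positive) symmetric operator `A`. -/
noncomputable def normA (A : V →ₗ[ℝ] V) (v : V) : ℝ := Real.sqrt ⟪A v, v⟫

theorem stmt_5
    (A : V →ₗ[ℝ] V) (hAsym : A.IsSymmetric) (hApos : ∀ v : V, v ≠ 0 → 0 < ⟪A v, v⟫)
    (B : V →ₗ[ℝ] V) (hBsym : B.IsSymmetric) (hBpos : ∀ v : V, v ≠ 0 → 0 < ⟪B v, v⟫)
    (Binv : V →ₗ[ℝ] V) (h1 : B ∘ₗ Binv = LinearMap.id) (h2 : Binv ∘ₗ B = LinearMap.id) :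
    sInf {μ : ℝ | Module.End.HasEigenvalue (B ∘ₗ A) μ} =
      (sSup {x : ℝ | ∃ v : V, normA A v = 1 ∧ x = ⟪Binv v, v⟫})⁻¹ ∧
    sSup {μ : ℝ | Module.End.HasEigenvalue (B ∘ₗ A) μ} =
      (sInf {x : ℝ | ∃ v : V, normA A v = 1 ∧ x = ⟪Binv v, v⟫})⁻¹ := by
  rcases subsingleton_or_nontrivial V with hsub | hnt
  · have hSempty : {μ : ℝ | Module.End.HasEigenvalue (B ∘ₗ A) μ} = ∅ := by
      ext μ
      simp only [Set.mem_setOf_eq, Set.mem_empty_iff_false, iff_false]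
      intro h
      obtain ⟨v, hv⟩ := h.exists_hasEigenvector
      exact hv.2 (Subsingleton.elim v 0)
    have hRempty : {x : ℝ | ∃ v : V, normA A v = 1 ∧ x = ⟪Binv v, v⟫} = ∅ := by
      ext x
      simp only [Set.mem_setOf_eq, Set.mem_empty_iff_false, iff_false]
      rintro ⟨v, hv1, _⟩
      rw [Subsingleton.elim v 0] at hv1
      simp [normA] at hv1
    rw [hSempty, hRempty]
    simp [Real.sInf_empty, Real.sSup_empty]
  -- nontrivial case
  · -- basic facts about B, Binv
    have hBinvB : ∀ x : V, Binv (B x) = x := fun x => LinearMap.congr_fun h2 x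
    have hBBinv : ∀ x : V, B (Binv x) = x := fun x => LinearMap.congr_fun h1 x
    have hBinvpos : ∀ x : V, x ≠ 0 → 0 < ⟪Binv x, x⟫ := by
      intro x hx
      have hb0 : Binv x ≠ 0 := by
        intro h
        apply hx
        rw [← hBBinv x, h, map_zero]
      calc (0:ℝ) < ⟪B (Binv x), Binv x⟫ := hBpos _ hb0
        _ = ⟪Binv x, B (Binv x)⟫ := real_inner_comm _ _
        _ = ⟪Binv x, x⟫ := by rw [hBBinv]
    -- A is bijective
    have hAinj : Function.Injective A := by
      intro x y hxy
      by_contra h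
      have hne : x - y ≠ 0 := sub_ne_zero.mpr h
      have := hApos _ hne
      rw [map_sub, hxy, sub_self] at this
      simp at this
    have hAsurj : Function.Surjective A := (LinearMap.injective_iff_surjective).mp hAinj
    set Aeq : V ≃ₗ[ℝ] V := LinearEquiv.ofBijective A ⟨hAinj, hAsurj⟩ with hAeq
    set Ainv : V →ₗ[ℝ] V := Aeq.symm.toLinearMap with hAinvdef
    have hAAinv : ∀ x : V, A (Ainv x) = x := fun x => Aeq.apply_symm_apply x
    have hAinvA : ∀ x : V, Ainv (A x) = x := fun x => Aeq.symm_apply_apply x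
    set T : V →ₗ[ℝ] V := Ainv ∘ₗ Binv with hTdef
    have hATx : ∀ x : V, A (T x) = Binv x := fun x => hAAinv (Binv x)
    -- T symmetric w.r.t. A-inner product
    have hBinvsym : ∀ x y : V, ⟪Binv x, y⟫ = ⟪x, Binv y⟫ := by
      intro x y
      conv_lhs => rw [← hBBinv y]
      rw [← hBsym (Binv x) (Binv y), hBBinv]
    have hTsym : ∀ x y : V, ⟪A (T x), y⟫ = ⟪A x, T y⟫ := by
      intro x y
      rw [hATx x, hBinvsym, ← hATx y, ← hAsym x (T y)]
    -- apply the generic spectral lemma with the A-inner product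
    set ST : Set ℝ := {μ : ℝ | ∃ v : V, v ≠ 0 ∧ T v = μ • v} with hSTdef
    have key := @spectral_key V (coreOf A hAsym hApos).toNormedAddCommGroup
      (InnerProductSpace.ofCore (coreOf A hAsym hApos).toCore)
      (by exact inferInstanceAs (FiniteDimensional ℝ V)) (by exact hnt) T (by exact hTsym)
    have hfin : ST.Finite := key.1
    have hne : ST.Nonempty := key.2.1
    have hray : ∀ v : V, sInf ST * ⟪A v, v⟫ ≤ ⟪A (T v), v⟫ ∧
        ⟪A (T v), v⟫ ≤ sSup ST * ⟪A v, v⟫ := key.2.2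
    clear key
    -- the eigenvalue set of B ∘ A
    set S : Set ℝ := {μ : ℝ | ∃ v : V, v ≠ 0 ∧ (B ∘ₗ A) v = μ • v} with hSdef2
    have hSeig : {μ : ℝ | Module.End.HasEigenvalue (B ∘ₗ A) μ} = S := by
      ext μ
      simp only [Set.mem_setOf_eq, hSdef2]
      constructor
      · intro h
        obtain ⟨v, hv⟩ := h.exists_hasEigenvector
        exact ⟨v, hv.2, hv.apply_eq_smul⟩
      · rintro ⟨v, hv0, hv⟩
        exact Module.End.hasEigenvalue_of_hasEigenvector
          ⟨Module.End.mem_eigenspace_iff.mpr hv, hv0⟩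
    -- correspondence between S and ST
    have hback : ∀ ν ∈ ST, 0 < ν ∧ ν⁻¹ ∈ S := by
      rintro ν ⟨v, hv0, hv⟩
      have hpos : 0 < ν := by
        have h3 : ⟪A (T v), v⟫ = ν * ⟪A v, v⟫ := by
          rw [hv, map_smul, real_inner_smul_left]
        rw [hATx] at h3
        have h4 := hBinvpos v hv0
        have h5 := hApos v hv0
        nlinarith
      refine ⟨hpos, v, hv0, ?_⟩
      have h6 : (B ∘ₗ A) (T v) = v := by
        simp only [hTdef, LinearMap.comp_apply]
        rw [hAAinv, hBBinv]
      rw [hv, map_smul] at h6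
      have : (B ∘ₗ A) v = ν⁻¹ • (ν • (B ∘ₗ A) v) := by
        rw [smul_smul, inv_mul_cancel₀ (ne_of_gt hpos), one_smul]
      rw [this, h6]
    have hforward : ∀ μ ∈ S, 0 < μ ∧ μ⁻¹ ∈ ST := by
      rintro μ ⟨v, hv0, hv⟩
      have hAv0 : A v ≠ 0 := fun h => hv0 (hAinj (by rw [h, map_zero]))
      have hpos : 0 < μ := by
        have h3 : ⟪A ((B ∘ₗ A) v), v⟫ = μ * ⟪A v, v⟫ := by
          rw [hv, map_smul, real_inner_smul_left]
        have h3' : ⟪A ((B ∘ₗ A) v), v⟫ = ⟪B (A v), A v⟫ := by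
          simp only [LinearMap.comp_apply]
          rw [hAsym (B (A v)) v, real_inner_comm]
        have h4 := hBpos _ hAv0
        have h5 := hApos v hv0
        nlinarith [h3' ▸ h3]
      refine ⟨hpos, v, hv0, ?_⟩
      have h6 : T ((B ∘ₗ A) v) = v := by
        simp only [hTdef, LinearMap.comp_apply]
        rw [hBinvB, hAinvA]
      rw [hv, map_smul] at h6
      have : T v = μ⁻¹ • (μ • T v) := by
        rw [smul_smul, inv_mul_cancel₀ (ne_of_gt hpos), one_smul]
      rw [this, h6]
    have hST : ST = (fun x : ℝ => x⁻¹) '' S := by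
      apply Set.Subset.antisymm
      · intro ν hν
        obtain ⟨hνpos, hmem⟩ := hback ν hν
        exact ⟨ν⁻¹, hmem, inv_inv ν⟩
      · rintro _ ⟨μ, hμ, rfl⟩
        exact (hforward μ hμ).2
    have hSfin : S.Finite := by
      have : S = (fun x : ℝ => x⁻¹) '' ST := by
        apply Set.Subset.antisymm
        · intro μ hμ
          exact ⟨μ⁻¹, (hforward μ hμ).2, inv_inv μ⟩
        · rintro _ ⟨ν, hν, rfl⟩
          exact (hback ν hν).2
      rw [this]; exact hfin.image _
    have hSne : S.Nonempty := by
      obtain ⟨ν, hν⟩ := hne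
      exact ⟨ν⁻¹, (hback ν hν).2⟩
    have hSpos : ∀ μ ∈ S, 0 < μ := fun μ hμ => (hforward μ hμ).1
    -- Rayleigh set R
    set R : Set ℝ := {x : ℝ | ∃ v : V, normA A v = 1 ∧ x = ⟪Binv v, v⟫} with hRdef
    have hnorm1 : ∀ v : V, normA A v = 1 → ⟪A v, v⟫ = 1 ∧ v ≠ 0 := by
      intro v hv
      have hv0 : v ≠ 0 := by
        rintro rfl
        simp [normA] at hv
      exact ⟨Real.sqrt_eq_one.mp hv, hv0⟩
    have hSTR : ST ⊆ R := by
      rintro ν ⟨v, hv0, hv⟩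
      have hq := hApos v hv0
      set c : ℝ := (normA A v)⁻¹ with hcdef
      have hnApos : 0 < normA A v := Real.sqrt_pos.mpr hq
      set u : V := c • v with hudef
      have hAu : ⟪A u, u⟫ = 1 := by
        have hsq : normA A v ^ 2 = ⟪A v, v⟫ := Real.sq_sqrt hq.le
        have hne0 : normA A v ≠ 0 := ne_of_gt hnApos
        rw [hudef, map_smul, real_inner_smul_left, real_inner_smul_right, hcdef, ← hsq]
        field_simp
      have hnormu : normA A u = 1 := by
        rw [normA, hAu, Real.sqrt_one]
      have hTu : T u = ν • u := by
        rw [hudef, map_smul, hv, smul_comm]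
      refine ⟨u, hnormu, ?_⟩
      have : ⟪Binv u, u⟫ = ν * ⟪A u, u⟫ := by
        rw [← hATx, hTu, map_smul, real_inner_smul_left]
      rw [this, hAu, mul_one]
    have hRbound : ∀ x ∈ R, sInf ST ≤ x ∧ x ≤ sSup ST := by
      rintro x ⟨v, hv1, rfl⟩
      obtain ⟨hAv1, hv0⟩ := hnorm1 v hv1
      have := hray v
      rw [hAv1, mul_one, mul_one, hATx] at this
      exact this
    have hRne : R.Nonempty := ⟨sSup ST, hSTR (hne.csSup_mem hfin)⟩
    have hbddA : BddAbove R := ⟨sSup ST, fun x hx => (hRbound x hx).2⟩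
    have hbddB : BddBelow R := ⟨sInf ST, fun x hx => (hRbound x hx).1⟩
    have hsupR : sSup R = sSup ST :=
      le_antisymm (csSup_le hRne fun x hx => (hRbound x hx).2)
        (le_csSup hbddA (hSTR (hne.csSup_mem hfin)))
    have hinfR : sInf R = sInf ST :=
      le_antisymm (csInf_le hbddB (hSTR (hne.csInf_mem hfin)))
        (le_csInf hRne fun x hx => (hRbound x hx).1)
    obtain ⟨hinv1, hinv2⟩ := inv_image_bounds S hSfin hSne hSpos
    rw [← hST] at hinv1 hinv2
    have hinfSpos : 0 < sInf S := hSpos _ (hSne.csInf_mem hSfin)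
    have hsupSpos : 0 < sSup S := hSpos _ (hSne.csSup_mem hSfin)
    constructor
    · rw [hSeig, hsupR, hinv1, inv_inv]
    · rw [hSeig, hinfR, hinv2, inv_inv]
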